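/- With B = BHH(m,r,1), B^n : (x_{i,1} x_{i,2} ⋯ x_{i,r})^∞ = ((a_1^4, ..., a_r^4))^n for every i ∈ [m] and n ≥ 1; in particular, the only associated prime of B^n not containing the product x_{i,1}⋯x_{i,r} for some i is (a_1, ..., a_r). -/

import Mathlib

open MvPolynomial

/-- Variables of the ring `k[a_1, …, a_r, c, x_{i,j} : i ∈ [m], j ∈ [r]]`. -/
abbrev Var (m r : ℕ) := Fin r ⊕ Unit ⊕ (Fin m × Fin r)

/-- The variable `a_j`. -/
noncomputable def va {k : Type*} [Field k] (m r : ℕ) (j : Fin r) :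
    MvPolynomial (Var m r) k := X (Sum.inl j)

/-- The variable `c`. -/
noncomputable def vc {k : Type*} [Field k] (m r : ℕ) :
    MvPolynomial (Var m r) k := X (Sum.inr (Sum.inl ()))

/-- The variable `x_{i,j}`. -/
noncomputable def vx {k : Type*} [Field k] (m r : ℕ) (i : Fin m) (j : Fin r) :
    MvPolynomial (Var m r) k := X (Sum.inr (Sum.inr (i, j)))

/-- `h_{i,j} = a_j^4 x_{i,j} x_{i,j+1}^2` (second index cyclic mod `r`). -/
noncomputable def hgen {k : Type*} [Field k] (m r : ℕ) [NeZero r] (i : Fin m) (j : Fin r) :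
    MvPolynomial (Var m r) k :=
  va m r j ^ 4 * vx m r i j * vx m r i (j + 1) ^ 2

/-- The ideal `BHH(m,r,1) = (a_j^6, a_j^5 a_{j+1} : j) + (c a_1^4 ⋯ a_r^4)
  + (a_j^4 x_{i,j} x_{i,j+1}^2 : i, j)`, indices cyclic mod `r`. -/
noncomputable def BHH {k : Type*} [Field k] (m r : ℕ) [NeZero r] :
    Ideal (MvPolynomial (Var m r) k) :=
  Ideal.span
    ((Set.range fun j : Fin r => va m r j ^ 6) ∪
      (Set.range fun j : Fin r => va m r j ^ 5 * va m r (j + 1)) ∪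
      {vc m r * ∏ j : Fin r, va m r j ^ 4} ∪
      (Set.range fun p : Fin m × Fin r => hgen m r p.1 p.2))

namespace SatAux

variable {S : Type*} [CommRing S] {σ : Type*}

theorem mem_mapC_iff (I : Ideal S) (p : MvPolynomial σ S) :
    p ∈ Ideal.map (C : S →+* MvPolynomial σ S) I ↔ ∀ m, coeff m p ∈ I := by
  classical
  constructor
  · intro hp
    induction hp using Submodule.span_induction with
    | mem x h =>
      obtain ⟨a, ha, rfl⟩ := h
      intro m
      rw [coeff_C]
      split
      · exact ha
      · exact I.zero_mem
    | zero => intro m; simp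
    | add a b _ _ ha hb => intro m; simpa [coeff_add] using I.add_mem (ha m) (hb m)
    | smul a b _ hb =>
      intro m
      rw [smul_eq_mul, coeff_mul]
      exact Ideal.sum_mem _ fun c _ => I.mul_mem_left _ (hb c.2)
  · intro h
    rw [as_sum p]
    refine Ideal.sum_mem _ fun v hv => ?_
    have : monomial v (coeff v p) = C (coeff v p) * monomial v 1 := by
      rw [C_mul_monomial, mul_one]
    rw [this]
    exact Ideal.mul_mem_right _ _ (Ideal.mem_map_of_mem _ (h v))

theorem mulX (I : Ideal S) (w : σ) (p : MvPolynomial σ S)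
    (h : p * X w ∈ Ideal.map (C : S →+* MvPolynomial σ S) I) :
    p ∈ Ideal.map (C : S →+* MvPolynomial σ S) I := by
  rw [mem_mapC_iff] at h ⊢
  intro m
  have := h (m + Finsupp.single w 1)
  rwa [coeff_mul_X] at this

theorem mulProd (I : Ideal S) {q : MvPolynomial σ S}
    (hq : q ∈ Submonoid.closure (Set.range (X : σ → MvPolynomial σ S))) :
    ∀ p, p * q ∈ Ideal.map (C : S →+* MvPolynomial σ S) I →
      p ∈ Ideal.map (C : S →+* MvPolynomial σ S) I := by
  induction hq using Submonoid.closure_induction with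
  | mem x hx =>
    obtain ⟨w, rfl⟩ := hx
    exact fun p h => mulX I w p h
  | one => intro p h; simpa using h
  | mul x y hx hy ihx ihy =>
    intro p h
    refine ihy p (ihx (p * y) ?_)
    rw [show p * y * x = p * (x * y) from by ring]
    exact h

theorem primary [LinearOrder σ] (I J : Ideal S) (N : ℕ) (hJI : J ^ N ≤ I)
    (hres : ∀ c ∉ J, ∃ u, 1 - u * c ∈ J) {g x : MvPolynomial σ S}
    (hg : g ∉ Ideal.map (C : S →+* MvPolynomial σ S) J)
    (hgx : g * x ∈ Ideal.map (C : S →+* MvPolynomial σ S) I) :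
    x ∈ Ideal.map (C : S →+* MvPolynomial σ S) I := by
  classical
  have hg' : ∃ m, coeff m g ∉ J := by
    rw [mem_mapC_iff] at hg; push_neg at hg; exact hg
  set F : Finset (Lex (σ →₀ ℕ)) :=
    (g.support.filter fun μ => coeff μ g ∉ J).image toLex with hF
  have hFne : F.Nonempty := by
    obtain ⟨m, hm⟩ := hg'
    have hms : m ∈ g.support := by
      rw [mem_support_iff]
      intro h0
      exact hm (h0 ▸ J.zero_mem)
    exact ⟨toLex m, Finset.mem_image_of_mem _ (Finset.mem_filter.2 ⟨hms, hm⟩)⟩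
  set m₀ : σ →₀ ℕ := ofLex (F.max' hFne) with hm₀def
  have hm₀ : coeff m₀ g ∉ J := by
    obtain ⟨μ, hμ, hμ2⟩ := Finset.mem_image.1 (F.max'_mem hFne)
    have : μ = m₀ := by rw [hm₀def, ← hμ2]; rfl
    rw [← this]
    exact (Finset.mem_filter.1 hμ).2
  have hmax : ∀ μ, coeff μ g ∉ J → toLex μ ≤ toLex m₀ := by
    intro μ hμ
    have hμs : μ ∈ g.support := by
      rw [mem_support_iff]; intro h0; exact hμ (h0 ▸ J.zero_mem)
    exact F.le_max' _ (Finset.mem_image_of_mem _ (Finset.mem_filter.2 ⟨hμs, hμ⟩))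
  obtain ⟨u, hu⟩ := hres _ hm₀
  have hJmul : ∀ t : ℕ, ∀ a ∈ J, ∀ b ∈ I ⊔ J ^ t, a * b ∈ I ⊔ J ^ (t + 1) := by
    intro t a ha b hb
    obtain ⟨bI, hbI, bJ, hbJ, rfl⟩ := Submodule.mem_sup.1 hb
    rw [mul_add]
    refine Submodule.add_mem _ (Submodule.mem_sup_left (I.mul_mem_left a hbI)) ?_
    refine Submodule.mem_sup_right ?_
    rw [pow_succ, mul_comm (J ^ t) J]
    exact Ideal.mul_mem_mul ha hbJ
  have main : ∀ t : ℕ, ∀ m, coeff m x ∈ I ⊔ J ^ t := by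
    intro t
    induction t with
    | zero => intro m; rw [pow_zero, Ideal.one_eq_top, sup_top_eq]; exact Submodule.mem_top
    | succ t ih =>
      have key : ∀ (M : ℕ) (ν : σ →₀ ℕ),
          ((x.support.filter fun μ => toLex ν < toLex μ).card < M) →
          coeff ν x ∈ I ⊔ J ^ (t + 1) := by
        intro M
        induction M with
        | zero => intro ν h; exact absurd h (Nat.not_lt_zero _)
        | succ M IH =>
          intro ν hν
          have hterm : ∀ p ∈ Finset.HasAntidiagonal.antidiagonal (m₀ + ν), p ≠ (m₀, ν) →
              coeff p.1 g * coeff p.2 x ∈ I ⊔ J ^ (t + 1) := by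
            rintro ⟨μ, ν'⟩ hp hne
            have hadd : μ + ν' = m₀ + ν := Finset.HasAntidiagonal.mem_antidiagonal.1 hp
            rcases lt_trichotomy (toLex μ) (toLex m₀) with hlt | heq | hgt
            · have hνν' : toLex ν < toLex ν' := by
                by_contra hle
                push_neg at hle
                have h2 : toLex (μ + ν') < toLex (m₀ + ν) := by
                  calc toLex (μ + ν') = toLex μ + toLex ν' := rfl
                  _ < toLex m₀ + toLex ν' := by exact add_lt_add_left hlt _
                  _ ≤ toLex m₀ + toLex ν := by exact add_le_add_right hle _
                  _ = toLex (m₀ + ν) := rfl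
                rw [hadd] at h2
                exact lt_irrefl _ h2
              by_cases hν' : ν' ∈ x.support
              · have hsub : (x.support.filter fun μ' => toLex ν' < toLex μ') ⊂
                    (x.support.filter fun μ' => toLex ν < toLex μ') := by
                  refine Finset.ssubset_iff_of_subset ?_ |>.2 ?_
                  · intro a ha
                    rw [Finset.mem_filter] at ha ⊢
                    exact ⟨ha.1, lt_trans hνν' ha.2⟩
                  · exact ⟨ν', Finset.mem_filter.2 ⟨hν', hνν'⟩,
                      fun hc => lt_irrefl _ (Finset.mem_filter.1 hc).2⟩
                have hcard := Finset.card_lt_card hsub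
                exact Ideal.mul_mem_left _ _ (IH ν' (by omega))
              · rw [notMem_support_iff] at hν'
                rw [hν', mul_zero]
                exact Submodule.zero_mem _
            · exfalso
              have hμ : μ = m₀ := by
                have h3 : (toLex μ : Lex (σ →₀ ℕ)) = toLex m₀ := heq
                exact congrArg ofLex h3
              apply hne
              rw [hμ] at hadd ⊢
              rw [add_left_cancel hadd]
            · have hμJ : coeff μ g ∈ J := by
                by_contra hcon
                exact absurd (hmax μ hcon) (not_le.2 hgt)
              exact hJmul t _ hμJ _ (ih ν')
          have hsum : coeff (m₀ + ν) (g * x) ∈ I := (mem_mapC_iff I _).1 hgx _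
          rw [coeff_mul] at hsum
          have hmem : ((m₀, ν) : (σ →₀ ℕ) × (σ →₀ ℕ)) ∈ Finset.HasAntidiagonal.antidiagonal (m₀ + ν) :=
            Finset.HasAntidiagonal.mem_antidiagonal.2 rfl
          have hsplit := Finset.add_sum_erase _ (fun p => coeff p.1 g * coeff p.2 x) hmem
          have hc₀ : coeff m₀ g * coeff ν x ∈ I ⊔ J ^ (t + 1) := by
            have h1 : (∑ p ∈ Finset.HasAntidiagonal.antidiagonal (m₀ + ν), coeff p.1 g * coeff p.2 x)
                ∈ I ⊔ J ^ (t + 1) := Submodule.mem_sup_left hsum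
            rw [← hsplit] at h1
            have h2 : (∑ p ∈ (Finset.HasAntidiagonal.antidiagonal (m₀ + ν)).erase (m₀, ν),
                coeff p.1 g * coeff p.2 x) ∈ I ⊔ J ^ (t + 1) := by
              refine Submodule.sum_mem _ fun p hp => ?_
              exact hterm p (Finset.mem_of_mem_erase hp) (Finset.ne_of_mem_erase hp)
            have h4 := Submodule.sub_mem _ h1 h2
            simpa using h4
          have hdecomp : coeff ν x =
              (1 - u * coeff m₀ g) * coeff ν x + u * (coeff m₀ g * coeff ν x) := by ring
          rw [hdecomp]
          exact Submodule.add_mem _ (hJmul t _ hu _ (ih ν))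
            (Ideal.mul_mem_left _ _ hc₀)
      intro m
      exact key ((x.support.filter fun μ => toLex m < toLex μ).card + 1) m (Nat.lt_succ_self _)
  rw [mem_mapC_iff]
  intro m
  have hm := main N m
  rwa [sup_eq_left.2 hJI] at hm

end SatAux

/-- The base-change equivalence moving the `a`-variables into the coefficients. -/
noncomputable def eqv (k : Type*) [Field k] (m r : ℕ) :
    MvPolynomial (Var m r) k ≃ₐ[k]
      MvPolynomial (Unit ⊕ Fin m × Fin r) (MvPolynomial (Fin r) k) :=
  (renameEquiv k (Equiv.sumComm (Fin r) (Unit ⊕ Fin m × Fin r))).trans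
    (sumAlgEquiv k (Unit ⊕ Fin m × Fin r) (Fin r))

lemma eqv_a {k : Type*} [Field k] (m r : ℕ) (j : Fin r) :
    eqv k m r (va m r j) = C (X j) := by
  simp [eqv, va, rename_X, sumAlgEquiv_X_inr]

lemma eqv_x {k : Type*} [Field k] (m r : ℕ) (i : Fin m) (j : Fin r) :
    eqv k m r (vx m r i j) = X (Sum.inr (i, j)) := by
  simp [eqv, vx, rename_X, sumAlgEquiv_X_inl]

theorem stmt16 {k : Type*} [Field k] (m r n : ℕ) (hm : 1 ≤ m) (hn : 1 ≤ n) (i : Fin m) :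
    (⨆ t : ℕ, ((BHH (k := k) m (r + 2)) ^ n).colon
        ((Ideal.span {(∏ j : Fin (r + 2), vx m (r + 2) i j) ^ t} : Ideal (MvPolynomial (Var m (r + 2)) k)) : Set (MvPolynomial (Var m (r + 2)) k)))
      = (Ideal.span (Set.range fun j : Fin (r + 2) => va (k := k) m (r + 2) j ^ 4)) ^ n ∧
    ∀ P ∈ associatedPrimes (MvPolynomial (Var m (r + 2)) k)
        (MvPolynomial (Var m (r + 2)) k ⧸ (BHH (k := k) m (r + 2)) ^ n),
      (∏ j : Fin (r + 2), vx (k := k) m (r + 2) i j) ∉ P →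
        P = Ideal.span (Set.range (va (k := k) m (r + 2))) := by
  classical
  set B := BHH (k := k) m (r + 2) with hB
  set A := Ideal.span (Set.range fun j : Fin (r + 2) => va (k := k) m (r + 2) j ^ 4) with hA
  set Q := Ideal.span (Set.range (va (k := k) m (r + 2))) with hQdef
  set f := ∏ j : Fin (r + 2), vx (k := k) m (r + 2) i j with hfdef
  -- `j + 1 ≠ j` in `Fin (r+2)`
  have hj1 : ∀ j : Fin (r + 2), (j + 1) ≠ j := by
    intro j h
    have h1 : (1 : Fin (r + 2)) = 0 := add_eq_left.1 h
    have h2 := Fin.one_eq_zero_iff.1 h1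
    omega
  -- B ≤ A
  have hBA : B ≤ A := by
    rw [hB, BHH, Ideal.span_le]
    intro p hp
    simp only [Set.mem_union, Set.mem_range, Set.mem_singleton_iff] at hp
    rcases hp with ((⟨j, rfl⟩ | ⟨j, rfl⟩) | rfl) | ⟨⟨i', j⟩, rfl⟩
    · rw [show va (k := k) m (r + 2) j ^ 6
          = va (k := k) m (r + 2) j ^ 4 * va (k := k) m (r + 2) j ^ 2 from by ring]
      exact Ideal.mul_mem_right _ _ (Ideal.subset_span ⟨j, rfl⟩)
    · rw [show va (k := k) m (r + 2) j ^ 5 * va (k := k) m (r + 2) (j + 1)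
          = va (k := k) m (r + 2) j ^ 4 * (va (k := k) m (r + 2) j * va (k := k) m (r + 2) (j + 1))
          from by ring]
      exact Ideal.mul_mem_right _ _ (Ideal.subset_span ⟨j, rfl⟩)
    · refine Ideal.mul_mem_left _ _ ?_
      rw [← Finset.mul_prod_erase Finset.univ _ (Finset.mem_univ (0 : Fin (r + 2)))]
      exact Ideal.mul_mem_right _ _ (Ideal.subset_span ⟨0, rfl⟩)
    · show hgen m (r + 2) i' j ∈ A
      rw [show hgen m (r + 2) i' j = va (k := k) m (r + 2) j ^ 4 *
          (vx m (r + 2) i' j * vx m (r + 2) i' (j + 1) ^ 2) from by rw [hgen]; ring]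
      exact Ideal.mul_mem_right _ _ (Ideal.subset_span ⟨j, rfl⟩)
  -- a_j^4 f^2 ∈ B
  have hfB : ∀ j : Fin (r + 2), va (k := k) m (r + 2) j ^ 4 * f ^ 2 ∈ B := by
    intro j
    have hmem1 : (j + 1) ∈ (Finset.univ.erase j : Finset (Fin (r + 2))) :=
      Finset.mem_erase.2 ⟨hj1 j, Finset.mem_univ _⟩
    have hprod : f ^ 2 = vx (k := k) m (r + 2) i j ^ 2 * (vx (k := k) m (r + 2) i (j + 1) ^ 2 *
        ∏ l ∈ (Finset.univ.erase j).erase (j + 1), vx (k := k) m (r + 2) i l ^ 2) := by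
      rw [hfdef, ← Finset.prod_pow,
        ← Finset.mul_prod_erase Finset.univ _ (Finset.mem_univ j),
        ← Finset.mul_prod_erase _ _ hmem1]
    rw [show va (k := k) m (r + 2) j ^ 4 * f ^ 2 = hgen m (r + 2) i j *
        (vx (k := k) m (r + 2) i j *
          ∏ l ∈ (Finset.univ.erase j).erase (j + 1), vx (k := k) m (r + 2) i l ^ 2) from by
      rw [hprod, hgen]; ring]
    refine Ideal.mul_mem_right _ _ ?_
    rw [hB, BHH]
    exact Ideal.subset_span (Set.mem_union_right _ ⟨(i, j), rfl⟩)
  -- A * (f^2) ≤ B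
  have hmulAB : A * Ideal.span {f ^ 2} ≤ B := by
    rw [Ideal.mul_le]
    intro p hp q hq
    obtain ⟨c, rfl⟩ := Ideal.mem_span_singleton.1 hq
    rw [hA] at hp
    induction hp using Submodule.span_induction with
    | mem y hy =>
      obtain ⟨j, rfl⟩ := hy
      rw [show va (k := k) m (r + 2) j ^ 4 * (f ^ 2 * c)
          = c * (va (k := k) m (r + 2) j ^ 4 * f ^ 2) from by ring]
      exact Ideal.mul_mem_left _ _ (hfB j)
    | zero => rw [zero_mul]; exact B.zero_mem
    | add a b ha hb iha ihb => rw [add_mul]; exact B.add_mem iha ihb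
    | smul a b hb ihb => rw [smul_eq_mul, mul_assoc]; exact B.mul_mem_left _ ihb
  -- A^n * (f^{2n}) ≤ B^n
  have hpow : A ^ n * Ideal.span {f ^ (2 * n)} ≤ B ^ n := by
    have h1 : (A * Ideal.span {f ^ 2}) ^ n ≤ B ^ n := Ideal.pow_right_mono hmulAB n
    rw [mul_pow, Ideal.span_singleton_pow, ← pow_mul] at h1
    exact h1
  have hABn : ∀ g ∈ A ^ n, g * f ^ (2 * n) ∈ B ^ n := fun g hg =>
    hpow (Ideal.mul_mem_mul hg (Ideal.subset_span rfl))
  -- the base-change equivalence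
  set eR : MvPolynomial (Var m (r + 2)) k ≃+*
      MvPolynomial (Unit ⊕ Fin m × Fin (r + 2)) (MvPolynomial (Fin (r + 2)) k) :=
    (eqv k m (r + 2)).toRingEquiv with heRdef
  have etrans : ∀ (II : Ideal (MvPolynomial (Var m (r + 2)) k)) (z),
      z ∈ II ↔ eR z ∈ II.map (eR : MvPolynomial (Var m (r + 2)) k →+* MvPolynomial (Unit ⊕ Fin m × Fin (r + 2)) (MvPolynomial (Fin (r + 2)) k)) := by
    intro II z
    rw [Ideal.map_comap_of_equiv, Ideal.mem_comap, RingEquiv.symm_apply_apply]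
  set A₀ : Ideal (MvPolynomial (Fin (r + 2)) k) :=
    Ideal.span (Set.range fun j : Fin (r + 2) => (X j : MvPolynomial (Fin (r + 2)) k) ^ 4)
    with hA₀
  set Q₀ : Ideal (MvPolynomial (Fin (r + 2)) k) :=
    Ideal.span (Set.range (X : Fin (r + 2) → MvPolynomial (Fin (r + 2)) k)) with hQ₀
  have heqva : ∀ j : Fin (r + 2), eR (va (k := k) m (r + 2) j) = C (X j) := fun j =>
    eqv_a m (r + 2) j
  have heqvx : ∀ j : Fin (r + 2), eR (vx (k := k) m (r + 2) i j) = X (Sum.inr (i, j)) :=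
    fun j => eqv_x m (r + 2) i j
  have hmapA : (A ^ n).map (eR : MvPolynomial (Var m (r + 2)) k →+* MvPolynomial (Unit ⊕ Fin m × Fin (r + 2)) (MvPolynomial (Fin (r + 2)) k))
      = Ideal.map (C : MvPolynomial (Fin (r + 2)) k →+* MvPolynomial (Unit ⊕ Fin m × Fin (r + 2)) (MvPolynomial (Fin (r + 2)) k)) (A₀ ^ n) := by
    rw [Ideal.map_pow, Ideal.map_pow]
    congr 1
    rw [hA, hA₀, Ideal.map_span, Ideal.map_span, ← Set.range_comp, ← Set.range_comp]
    refine congrArg Ideal.span (congrArg Set.range (funext fun j => ?_))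
    show eR (va (k := k) m (r + 2) j ^ 4) = C ((X j : MvPolynomial (Fin (r + 2)) k) ^ 4)
    rw [map_pow, heqva j, map_pow]
  have hmapQ : Q.map (eR : MvPolynomial (Var m (r + 2)) k →+* MvPolynomial (Unit ⊕ Fin m × Fin (r + 2)) (MvPolynomial (Fin (r + 2)) k))
      = Ideal.map (C : MvPolynomial (Fin (r + 2)) k →+* MvPolynomial (Unit ⊕ Fin m × Fin (r + 2)) (MvPolynomial (Fin (r + 2)) k)) Q₀ := by
    rw [hQdef, hQ₀, Ideal.map_span, Ideal.map_span, ← Set.range_comp, ← Set.range_comp]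
    exact congrArg Ideal.span (congrArg Set.range (funext fun j => heqva j))
  -- facts about A₀ and Q₀
  have hQ₀rad : Q₀ ≤ (A₀ ^ n).radical := by
    rw [hQ₀, Ideal.span_le]
    rintro p ⟨j, rfl⟩
    show X j ∈ (A₀ ^ n).radical
    rw [Ideal.mem_radical_iff]
    have hX4 : (X j : MvPolynomial (Fin (r + 2)) k) ^ 4 ∈ A₀ := by
      rw [hA₀]
      exact Ideal.subset_span ⟨j, rfl⟩
    exact ⟨4 * n, by
      rw [pow_mul]
      exact Ideal.pow_mem_pow hX4 n⟩
  have hQ₀fg : Q₀.FG := Submodule.fg_span (Set.finite_range _)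
  have hsubC : ∀ p : MvPolynomial (Fin (r + 2)) k, p - C (constantCoeff p) ∈ Q₀ := by
    intro p
    induction p using MvPolynomial.induction_on with
    | C a => rw [constantCoeff_C, sub_self]; exact Q₀.zero_mem
    | add p q hp hq =>
      have h3 := Q₀.add_mem hp hq
      rw [show p + q - C (constantCoeff (p + q))
          = (p - C (constantCoeff p)) + (q - C (constantCoeff q)) from by
        rw [map_add, map_add]; ring]
      exact h3
    | mul_X p s hp =>
      have h1 : constantCoeff (p * X s) = 0 := by rw [map_mul, constantCoeff_X, mul_zero]
      rw [h1, map_zero, sub_zero]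
      exact Ideal.mul_mem_left _ _ (Ideal.subset_span ⟨s, rfl⟩)
  have hres : ∀ c ∉ Q₀, ∃ u, 1 - u * c ∈ Q₀ := by
    intro c hc
    have hcc : constantCoeff c ≠ 0 := by
      intro h0
      apply hc
      have h4 := hsubC c
      rwa [h0, map_zero, sub_zero] at h4
    refine ⟨C (constantCoeff c)⁻¹, ?_⟩
    have h2 := hsubC (C (constantCoeff c)⁻¹ * c)
    have h3 : constantCoeff (C (constantCoeff c)⁻¹ * c) = 1 := by
      rw [map_mul, constantCoeff_C, inv_mul_cancel₀ hcc]
    rw [h3, map_one] at h2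
    simpa [neg_sub] using Q₀.neg_mem h2
  -- saturation property
  have hsatur : ∀ (t : ℕ) (y : MvPolynomial (Var m (r + 2)) k),
      f ^ t * y ∈ A ^ n → y ∈ A ^ n := by
    intro t y hy
    rw [etrans (A ^ n) _, hmapA, map_mul, map_pow] at hy
    rw [etrans (A ^ n) y, hmapA]
    have hef : eR f = ∏ j : Fin (r + 2), X (Sum.inr (i, j) : Unit ⊕ Fin m × Fin (r + 2)) := by
      rw [hfdef, map_prod]
      exact Finset.prod_congr rfl fun j _ => heqvx j
    have hfclos : eR f ∈ Submonoid.closure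
        (Set.range (X : (Unit ⊕ Fin m × Fin (r + 2)) → _)) := by
      rw [hef]
      exact Submonoid.prod_mem _ fun j _ => Submonoid.subset_closure ⟨_, rfl⟩
    refine SatAux.mulProd _ (Submonoid.pow_mem _ hfclos t) (eR y) ?_
    rw [mul_comm]
    exact hy
  -- primary property
  have hprimary : ∀ gg y : MvPolynomial (Var m (r + 2)) k,
      gg ∉ Q → gg * y ∈ A ^ n → y ∈ A ^ n := by
    intro gg y hgQ hgy
    rw [etrans Q gg, hmapQ] at hgQ
    rw [etrans (A ^ n) _, hmapA, map_mul] at hgy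
    rw [etrans (A ^ n) y, hmapA]
    letI : LinearOrder (Unit ⊕ Fin m × Fin (r + 2)) :=
      LinearOrder.lift' (fun w => (Fintype.equivFin (Unit ⊕ Fin m × Fin (r + 2))) w)
        (Equiv.injective _)
    obtain ⟨N, hN⟩ := Ideal.exists_pow_le_of_le_radical_of_fg hQ₀rad hQ₀fg
    exact SatAux.primary _ _ N hN hres hgQ hgy
  constructor
  · -- first part
    apply le_antisymm
    · apply iSup_le
      intro t g hg
      have h1 : g * f ^ t ∈ B ^ n := Ideal.mem_colon_span_singleton.1 hg
      have h2 : g * f ^ t ∈ A ^ n := Ideal.pow_right_mono hBA n h1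
      exact hsatur t g (by rwa [mul_comm] at h2)
    · refine le_trans ?_ (le_iSup (fun t => (B ^ n).colon ((Ideal.span {f ^ t} : Ideal (MvPolynomial (Var m (r + 2)) k)) : Set (MvPolynomial (Var m (r + 2)) k))) (2 * n))
      intro g hg
      rw [Ideal.mem_colon_span_singleton]
      exact hABn g hg
  · -- second part
    intro P hPmem hfP
    obtain ⟨hP, x0, hx0⟩ := (isAssociatedPrime_iff (I := P)).1 hPmem
    obtain ⟨x, rfl⟩ := Ideal.Quotient.mk_surjective x0
    have hmem : ∀ gg : MvPolynomial (Var m (r + 2)) k, gg ∈ P ↔ gg * x ∈ B ^ n := by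
      intro gg
      rw [hx0, Submodule.mem_colon_singleton, Submodule.mem_bot]
      rw [show gg • (Ideal.Quotient.mk (B ^ n) x) = Ideal.Quotient.mk (B ^ n) (gg * x) from rfl]
      exact Ideal.Quotient.eq_zero_iff_mem
    have hxA : x ∉ A ^ n := by
      intro hxA
      have h1 : x * f ^ (2 * n) ∈ B ^ n := hABn x hxA
      have h2 : f ^ (2 * n) ∈ P := (hmem _).2 (by rwa [mul_comm] at h1)
      exact hfP (hP.mem_of_pow_mem _ h2)
    apply le_antisymm
    · intro g hg
      by_contra hgQ
      exact hxA (hprimary g x hgQ (Ideal.pow_right_mono hBA n ((hmem g).1 hg)))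
    · rw [hQdef, Ideal.span_le]
      rintro p ⟨j, rfl⟩
      have h1 : (va (k := k) m (r + 2) j ^ 4 * f ^ 2) ^ n ∈ B ^ n :=
        Ideal.pow_mem_pow (hfB j) n
      have h3 : (va (k := k) m (r + 2) j ^ 4 * f ^ 2) ^ n ∈ P :=
        (hmem _).2 (Ideal.mul_mem_right x _ h1)
      have h4 := hP.mem_of_pow_mem _ h3
      rcases hP.mem_or_mem h4 with h5 | h5
      · exact hP.mem_of_pow_mem _ h5
      · exact absurd (hP.mem_of_pow_mem _ h5) hfP
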